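/- arXiv:1203.6527 — 2 statements merged into one kernel-verified Lean document; each statement's English description precedes it below -/
import Mathlib

section
/- There exists a constant C > 0 such that for every x ∈ ℝ³, the integral A(x) = ∫_{ℝ³} (∫₀^∞ e^{-t - |y|²/(4κγ₁ t)} t^{-3/2} dt) · |x|²/|x−y|² dy is bounded by C, uniformly in x, where κγ₁ > 0 is a fixed constant. -/
noncomputable section
open MeasureTheory Real Filter
open scoped ENNReal RealInnerProductSpace BigOperators

abbrev E3 := EuclideanSpace ℝ (Fin 3)

def pd (i : Fin 3) (f : E3 → ℝ) (x : E3) : ℝ := fderiv ℝ f x (EuclideanSpace.single i (1:ℝ))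
def lap (f : E3 → ℝ) (x : E3) : ℝ := ∑ i, pd i (pd i f) x
def divg (v : E3 → E3) (x : E3) : ℝ := ∑ i, fderiv ℝ v x (EuclideanSpace.single i (1:ℝ)) i
def lapv (v : E3 → E3) (x : E3) : E3 :=
  (WithLp.equiv 2 (Fin 3 → ℝ)).symm fun i => lap (fun y => v y i) x

section Aux

lemma exp_neg_le_one' (s : ℝ) (hs : 0 < s) : Real.exp (-s) ≤ 1 / s ^ 1 := by
  rw [Real.exp_neg, pow_one, one_div]
  exact inv_anti₀ hs (by linarith [Real.add_one_le_exp s])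

lemma exp_neg_le_cube' (s : ℝ) (hs : 0 < s) : Real.exp (-s) ≤ 27 / s ^ 3 := by
  have h1 : s ^ 3 / 27 ≤ Real.exp s := by
    have h2 : s / 3 ≤ Real.exp (s / 3) := by linarith [Real.add_one_le_exp (s/3)]
    have h3 : (s / 3) ^ 3 ≤ Real.exp (s / 3) ^ 3 := pow_le_pow_left₀ (by positivity) h2 3
    have h4 : Real.exp (s / 3) ^ 3 = Real.exp s := by
      rw [← Real.exp_nat_mul]; congr 1; push_cast; ring
    calc s ^ 3 / 27 = (s / 3) ^ 3 := by ring
    _ ≤ Real.exp (s / 3) ^ 3 := h3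
    _ = Real.exp s := h4
  have h5 : (Real.exp s)⁻¹ ≤ (s ^ 3 / 27)⁻¹ := inv_anti₀ (by positivity) h1
  rw [Real.exp_neg]
  calc (Real.exp s)⁻¹ ≤ (s ^ 3 / 27)⁻¹ := h5
  _ = 27 / s ^ 3 := by rw [inv_div]

/-- The Bessel-type kernel. -/
def Kker (c : ℝ) (y : E3) : ℝ :=
  ∫ t in Set.Ioi (0:ℝ), Real.exp (-t - ‖y‖^2 / (4 * c * t)) * t ^ (-(3:ℝ)/2)

lemma Kker_nonneg (c : ℝ) (y : E3) : 0 ≤ Kker c y := by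
  apply setIntegral_nonneg measurableSet_Ioi
  intro t ht
  have ht' : (0:ℝ) < t := ht
  have := Real.rpow_pos_of_pos ht' (-(3:ℝ)/2)
  positivity

lemma Kker_le (c : ℝ) (hc : 0 < c) (n : ℕ) (hn : 1 ≤ n) (B : ℝ)
    (hB : ∀ s : ℝ, 0 < s → Real.exp (-s) ≤ B / s ^ n) (y : E3) (hy : y ≠ 0) :
    Kker c y ≤ B * (4*c) ^ n * Real.Gamma ((n:ℝ) - 1/2) / ‖y‖ ^ (2*n) := by
  have hy' : 0 < ‖y‖ := norm_pos_iff.mpr hy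
  set a : ℝ := ‖y‖^2 / (4*c) with ha
  have ha0 : 0 < a := by positivity
  have hns : 0 < (n:ℝ) - 1/2 := by
    have : (1:ℝ) ≤ (n:ℝ) := by exact_mod_cast hn
    linarith
  have hint : IntegrableOn
      (fun t : ℝ => (B / a ^ n) * (Real.exp (-t) * t ^ (((n:ℝ) - 1/2) - 1))) (Set.Ioi 0) :=
    (Real.GammaIntegral_convergent hns).const_mul _
  have hmono : Kker c y ≤
      ∫ t in Set.Ioi (0:ℝ), (B / a ^ n) * (Real.exp (-t) * t ^ (((n:ℝ) - 1/2) - 1)) := by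
    apply integral_mono_of_nonneg
    · filter_upwards [ae_restrict_mem measurableSet_Ioi] with t ht
      have ht' : (0:ℝ) < t := ht
      have := Real.rpow_pos_of_pos ht' (-(3:ℝ)/2)
      positivity
    · exact hint
    · filter_upwards [ae_restrict_mem measurableSet_Ioi] with t ht
      have ht' : (0:ℝ) < t := ht
      have hsplit : Real.exp (-t - ‖y‖^2 / (4*c*t)) = Real.exp (-t) * Real.exp (-(a/t)) := by
        rw [← Real.exp_add]
        congr 1
        rw [ha, div_div]
        ring
      have hbd : Real.exp (-(a/t)) ≤ B * t ^ n / a ^ n := by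
        have := hB (a/t) (by positivity)
        calc Real.exp (-(a/t)) ≤ B / (a/t) ^ n := this
        _ = B * t ^ n / a ^ n := by
            rw [div_pow]
            field_simp
      have hpos : 0 < t ^ (-(3:ℝ)/2) := Real.rpow_pos_of_pos ht' _
      calc Real.exp (-t - ‖y‖^2 / (4*c*t)) * t ^ (-(3:ℝ)/2)
          = (Real.exp (-t) * t ^ (-(3:ℝ)/2)) * Real.exp (-(a/t)) := by
            rw [hsplit]; ring
        _ ≤ (Real.exp (-t) * t ^ (-(3:ℝ)/2)) * (B * t ^ n / a ^ n) := by
            apply mul_le_mul_of_nonneg_left hbd (by positivity)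
        _ = (B / a ^ n) * (Real.exp (-t) * ((t:ℝ) ^ (n:ℕ) * t ^ (-(3:ℝ)/2))) := by ring
        _ = (B / a ^ n) * (Real.exp (-t) * t ^ (((n:ℝ) - 1/2) - 1)) := by
            rw [← Real.rpow_natCast t n, ← Real.rpow_add ht']
            congr 2
            ring
  have hval : ∫ t in Set.Ioi (0:ℝ), (B / a ^ n) * (Real.exp (-t) * t ^ (((n:ℝ) - 1/2) - 1))
      = (B / a ^ n) * Real.Gamma ((n:ℝ) - 1/2) := by
    rw [integral_const_mul, ← Real.Gamma_eq_integral hns]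
  refine hmono.trans (le_of_eq ?_)
  rw [hval]
  have hane : a ^ n = ‖y‖ ^ (2*n) / (4*c) ^ n := by
    rw [ha, div_pow, ← pow_mul]
  rw [hane]
  have h4c : (0:ℝ) < (4*c) ^ n := by positivity
  have hyy : (0:ℝ) < ‖y‖ ^ (2*n) := by positivity
  field_simp

/-- Singular weight on the unit ball. -/
def Wfun : E3 → ℝ := Set.indicator (Metric.ball (0:E3) 1) (fun z => 1 / ‖z‖^2)

lemma Wfun_nonneg (z : E3) : 0 ≤ Wfun z := by
  unfold Wfun
  apply Set.indicator_nonneg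
  intro z _; positivity

lemma Wfun_meas : Measurable Wfun :=
  (measurable_const.div ((measurable_norm).pow_const 2)).indicator measurableSet_ball

lemma Wfun_integrable : Integrable Wfun := by
  refine ⟨Wfun_meas.aestronglyMeasurable, ?_⟩
  rw [hasFiniteIntegral_iff_ofReal (Filter.Eventually.of_forall Wfun_nonneg)]
  have key : ∫⁻ z : E3, ENNReal.ofReal (Wfun z)
      = ∫⁻ z in Metric.ball (0:E3) 1, ENNReal.ofReal (1 / ‖z‖^2) := by
    unfold Wfun
    rw [← lintegral_indicator measurableSet_ball]
    congr 1
    ext z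
    by_cases hz : z ∈ Metric.ball (0:E3) 1 <;>
      simp [Set.indicator_of_mem, Set.indicator_of_notMem, hz]
  rw [key]
  set A : ℕ → Set E3 := fun n => Metric.ball (0:E3) ((1/2)^n) \ Metric.ball (0:E3) ((1/2)^(n+1))
    with hA
  set V : ℝ≥0∞ := volume (Metric.ball (0:E3) 1) with hV
  have hVlt : V < ∞ := measure_ball_lt_top
  have hcover : Metric.ball (0:E3) 1 ⊆ {(0:E3)} ∪ ⋃ n, A n := by
    intro z hz
    rcases eq_or_ne z 0 with rfl | hz0
    · exact Or.inl rfl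
    right
    have h0 : 0 < ‖z‖ := norm_pos_iff.mpr hz0
    have h1 : ‖z‖ < 1 := by simpa [Metric.mem_ball, dist_zero_right] using hz
    have hex : ∃ n : ℕ, (1/2:ℝ)^(n+1) ≤ ‖z‖ := by
      obtain ⟨n, hn⟩ := exists_pow_lt_of_lt_one h0 (by norm_num : (1/2:ℝ) < 1)
      refine ⟨n, le_of_lt (lt_of_le_of_lt ?_ hn)⟩
      exact pow_le_pow_of_le_one (by norm_num) (by norm_num) (Nat.le_succ n)
    classical
    let n := Nat.find hex
    have hn1 : (1/2:ℝ)^(n+1) ≤ ‖z‖ := Nat.find_spec hex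
    have hn2 : ‖z‖ < (1/2:ℝ)^n := by
      rcases Nat.eq_zero_or_pos n with h0' | h0'
      · rw [h0']; simpa using h1
      · have := Nat.find_min hex (m := n - 1) (by omega)
        push_neg at this
        convert this using 2
        all_goals first | rfl | omega
    exact Set.mem_iUnion.mpr ⟨n, by
      constructor
      · simpa [Metric.mem_ball, dist_zero_right] using hn2
      · simp only [Metric.mem_ball, dist_zero_right, not_lt]
        simpa using hn1⟩
  calc ∫⁻ z in Metric.ball (0:E3) 1, ENNReal.ofReal (1 / ‖z‖^2)
      ≤ ∫⁻ z in ({(0:E3)} ∪ ⋃ n, A n), ENNReal.ofReal (1 / ‖z‖^2) :=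
        lintegral_mono_set hcover
    _ ≤ (∫⁻ z in ({(0:E3)} : Set E3), ENNReal.ofReal (1 / ‖z‖^2))
        + ∫⁻ z in (⋃ n, A n), ENNReal.ofReal (1 / ‖z‖^2) := lintegral_union_le _ _ _
    _ ≤ 0 + ∑' n, ∫⁻ z in A n, ENNReal.ofReal (1 / ‖z‖^2) := by
        gcongr
        · have : volume ({(0:E3)} : Set E3) = 0 := measure_singleton _
          rw [setLIntegral_measure_zero _ _ this]
        · exact lintegral_iUnion_le _ _
    _ < ∞ := by
        rw [zero_add]
        have hbound : ∀ n : ℕ, ∫⁻ z in A n, ENNReal.ofReal (1 / ‖z‖^2)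
            ≤ ENNReal.ofReal 4 * ENNReal.ofReal ((1/2)^n) * V := by
          intro n
          have hle : ∀ z ∈ A n, ENNReal.ofReal (1 / ‖z‖^2) ≤ ENNReal.ofReal (4^(n+1)) := by
            intro z hz
            apply ENNReal.ofReal_le_ofReal
            have hz2 : (1/2:ℝ)^(n+1) ≤ ‖z‖ := by
              have := hz.2
              simp only [Metric.mem_ball, dist_zero_right, not_lt] at this
              exact this
            have hz2' : (0:ℝ) < ‖z‖ := lt_of_lt_of_le (by positivity) hz2
            rw [div_le_iff₀ (by positivity)]
            have : ((1/2:ℝ)^(n+1))^2 ≤ ‖z‖^2 := by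
              apply pow_le_pow_left₀ (by positivity) hz2
            calc (1:ℝ) = 4^(n+1) * ((1/2)^(n+1))^2 := by
                  rw [← pow_mul, mul_comm (n+1) 2, pow_mul, ← mul_pow]; norm_num
              _ ≤ 4^(n+1) * ‖z‖^2 := by gcongr
          calc ∫⁻ z in A n, ENNReal.ofReal (1 / ‖z‖^2)
              ≤ ∫⁻ _ in A n, ENNReal.ofReal (4^(n+1)) := by
                apply setLIntegral_mono measurable_const hle
            _ = ENNReal.ofReal (4^(n+1)) * volume (A n) := by
                rw [setLIntegral_const]
            _ ≤ ENNReal.ofReal (4^(n+1)) * volume (Metric.ball (0:E3) ((1/2)^n)) := by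
                gcongr
                exact Set.diff_subset
            _ = ENNReal.ofReal (4^(n+1)) *
                (ENNReal.ofReal (((1/2:ℝ)^n) ^ (Module.finrank ℝ E3)) * V) := by
                rw [MeasureTheory.Measure.addHaar_ball _ _ (by positivity)]
            _ = ENNReal.ofReal 4 * ENNReal.ofReal ((1/2)^n) * V := by
                rw [← ENNReal.ofReal_mul (by positivity), ← mul_assoc,
                  ← ENNReal.ofReal_mul (by positivity)]
                congr 2
                have h3 : Module.finrank ℝ E3 = 3 := by simp
                rw [h3, ← pow_mul]
                calc (4:ℝ)^(n+1) * (1/2)^(n*3)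
                    = 4 * (4^n * ((1/2)^3)^n) := by
                      rw [pow_succ, mul_comm n 3, pow_mul]; ring
                  _ = 4 * (4 * (1/2)^3)^n := by rw [← mul_pow]
                  _ = 4 * (1/2)^n := by norm_num
        calc ∑' n, ∫⁻ z in A n, ENNReal.ofReal (1 / ‖z‖^2)
            ≤ ∑' n : ℕ, ENNReal.ofReal 4 * ENNReal.ofReal ((1/2)^n) * V :=
              ENNReal.tsum_le_tsum hbound
          _ = ENNReal.ofReal 4 * (∑' n : ℕ, ENNReal.ofReal ((1/2)^n)) * V := by
              rw [ENNReal.tsum_mul_right, ENNReal.tsum_mul_left]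
          _ < ∞ := by
              have hgeo : ∑' n : ℕ, ENNReal.ofReal ((1/2:ℝ)^n)
                  = ∑' n : ℕ, (ENNReal.ofReal (1/2:ℝ))^n := by
                congr 1; ext n; rw [ENNReal.ofReal_pow (by norm_num)]
              rw [hgeo, ENNReal.tsum_geometric]
              apply ENNReal.mul_lt_top
              apply ENNReal.mul_lt_top
              · exact ENNReal.ofReal_lt_top
              · rw [ENNReal.inv_lt_top, tsub_pos_iff_lt]
                exact ENNReal.ofReal_lt_one.mpr (by norm_num)
              · exact hVlt

def C1c (c : ℝ) : ℝ := 4 * c * Real.Gamma (1/2)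
def C3c (c : ℝ) : ℝ := 27 * (4*c)^3 * Real.Gamma (5/2)
def Ac (c : ℝ) : ℝ := 16 * (C1c c + C3c c) + 1
def Pfun : E3 → ℝ := fun y => (1 + ‖y‖) ^ (-(4:ℝ))
def Dfun (c : ℝ) : E3 → ℝ := fun y => Ac c * (Wfun y + Pfun y)

lemma C1c_pos {c : ℝ} (hc : 0 < c) : 0 < C1c c := by
  have := Real.Gamma_pos_of_pos (show (0:ℝ) < 1/2 by norm_num)
  unfold C1c; positivity

lemma C3c_pos {c : ℝ} (hc : 0 < c) : 0 < C3c c := by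
  have := Real.Gamma_pos_of_pos (show (0:ℝ) < 5/2 by norm_num)
  unfold C3c; positivity

lemma Ac_pos {c : ℝ} (hc : 0 < c) : 0 < Ac c := by
  have h1 := C1c_pos hc
  have h3 := C3c_pos hc
  unfold Ac; nlinarith

lemma Ac_ge1 {c : ℝ} (hc : 0 < c) : 16 * C1c c ≤ Ac c := by
  have h3 := C3c_pos hc
  unfold Ac; nlinarith

lemma Ac_ge3 {c : ℝ} (hc : 0 < c) : 16 * C3c c ≤ Ac c := by
  have h1 := C1c_pos hc
  unfold Ac; nlinarith

lemma hK1 {c : ℝ} (hc : 0 < c) (y : E3) (hy : y ≠ 0) : Kker c y ≤ C1c c / ‖y‖^2 := by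
  have h := Kker_le c hc 1 le_rfl 1 exp_neg_le_one' y hy
  have e : ((1:ℕ):ℝ) - 1/2 = 1/2 := by norm_num
  rw [e] at h
  refine h.trans (le_of_eq ?_)
  unfold C1c
  norm_num

lemma hK3 {c : ℝ} (hc : 0 < c) (y : E3) (hy : y ≠ 0) : Kker c y ≤ C3c c / ‖y‖^6 := by
  have h := Kker_le c hc 3 (by norm_num) 27 exp_neg_le_cube' y hy
  have e : ((3:ℕ):ℝ) - 1/2 = 5/2 := by norm_num
  rw [e] at h
  refine h.trans (le_of_eq ?_)
  unfold C3c
  norm_num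

lemma Pfun_val (y : E3) : Pfun y = 1 / (1 + ‖y‖)^(4:ℕ) := by
  have h1 : (0:ℝ) < 1 + ‖y‖ := by positivity
  unfold Pfun
  rw [show (-(4:ℝ)) = -((4:ℕ):ℝ) by norm_num, Real.rpow_neg h1.le, Real.rpow_natCast, one_div]

lemma Pfun_nonneg (y : E3) : 0 ≤ Pfun y := by
  rw [Pfun_val]; positivity

lemma Pfun_integrable : Integrable Pfun := by
  apply integrable_one_add_norm
  simp
  norm_num

lemma Dfun_integrable {c : ℝ} : Integrable (Dfun c) :=
  (Wfun_integrable.add Pfun_integrable).const_mul (Ac c)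

lemma Dfun_nonneg {c : ℝ} (hc : 0 < c) (y : E3) : 0 ≤ Dfun c y := by
  have h1 := Wfun_nonneg y
  have h2 := Pfun_nonneg y
  have h3 := (Ac_pos hc).le
  unfold Dfun
  positivity

lemma hc1 {c : ℝ} (hc : 0 < c) (y : E3) (hy : y ≠ 0) : Kker c y ≤ Dfun c y := by
  have hy' : 0 < ‖y‖ := norm_pos_iff.mpr hy
  have hA0 := Ac_pos hc
  have hP0 := Pfun_nonneg y
  have hW0 := Wfun_nonneg y
  by_cases hb : ‖y‖ < 1
  · have hW : Wfun y = 1/‖y‖^2 := by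
      rw [Wfun, Set.indicator_of_mem (by simpa [Metric.mem_ball, dist_zero_right] using hb)]
    calc Kker c y ≤ C1c c / ‖y‖^2 := hK1 hc y hy
      _ = C1c c * (1/‖y‖^2) := by ring
      _ ≤ Ac c * (1/‖y‖^2) := by
          have h1 := Ac_ge1 hc
          have h2 := C1c_pos hc
          apply mul_le_mul_of_nonneg_right (by linarith) (by positivity)
      _ ≤ Ac c * (Wfun y + Pfun y) := by
          rw [hW]
          nlinarith [mul_nonneg hA0.le hP0]
      _ = Dfun c y := rfl
  · push_neg at hb
    have h14 : (1 + ‖y‖)^(4:ℕ) ≤ 16 * ‖y‖^6 := by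
      have h2 : 1 + ‖y‖ ≤ 2 * ‖y‖ := by linarith
      have h4 : ‖y‖^4 ≤ ‖y‖^6 := pow_le_pow_right₀ hb (by norm_num)
      calc (1 + ‖y‖)^(4:ℕ) ≤ (2*‖y‖)^(4:ℕ) := pow_le_pow_left₀ (by positivity) h2 4
        _ = 16 * ‖y‖^4 := by ring
        _ ≤ 16 * ‖y‖^6 := by linarith
    calc Kker c y ≤ C3c c / ‖y‖^6 := hK3 hc y hy
      _ ≤ 16 * C3c c / (1 + ‖y‖)^(4:ℕ) := by
          rw [div_le_div_iff₀ (by positivity) (by positivity)]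
          nlinarith [(C3c_pos hc).le, h14]
      _ = 16 * C3c c * Pfun y := by rw [Pfun_val]; ring
      _ ≤ Ac c * Pfun y := by
          have h1 := C1c_pos hc
          apply mul_le_mul_of_nonneg_right (Ac_ge3 hc) hP0
      _ ≤ Dfun c y := by
          show Ac c * Pfun y ≤ Ac c * (Wfun y + Pfun y)
          nlinarith [mul_nonneg hA0.le hW0]

lemma hcM {c : ℝ} (hc : 0 < c) (y : E3) (hy : y ≠ 0) : Kker c y * ‖y‖^2 ≤ C1c c := by
  have hy' : 0 < ‖y‖ := norm_pos_iff.mpr hy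
  calc Kker c y * ‖y‖^2 ≤ (C1c c / ‖y‖^2) * ‖y‖^2 :=
        mul_le_mul_of_nonneg_right (hK1 hc y hy) (by positivity)
    _ = C1c c := by field_simp

lemma hc2 {c : ℝ} (hc : 0 < c) (y : E3) (hy : y ≠ 0) : Kker c y * ‖y‖^2 ≤ Dfun c y := by
  have hy' : 0 < ‖y‖ := norm_pos_iff.mpr hy
  have hA0 := Ac_pos hc
  have hP0 := Pfun_nonneg y
  have hW0 := Wfun_nonneg y
  by_cases hb : ‖y‖ < 1
  · have hPge : 1/(16:ℝ) ≤ Pfun y := by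
      rw [Pfun_val]
      have h2 : (1 + ‖y‖)^(4:ℕ) ≤ 16 := by
        calc (1 + ‖y‖)^(4:ℕ) ≤ 2^(4:ℕ) := pow_le_pow_left₀ (by positivity) (by linarith) 4
          _ = 16 := by norm_num
      rw [div_le_div_iff₀ (by norm_num) (by positivity)]
      linarith
    calc Kker c y * ‖y‖^2 ≤ C1c c := hcM hc y hy
      _ ≤ Ac c * (1/16) := by
          have := Ac_ge1 hc
          linarith
      _ ≤ Ac c * Pfun y := by gcongr
      _ ≤ Dfun c y := by
          show Ac c * Pfun y ≤ Ac c * (Wfun y + Pfun y)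
          nlinarith [mul_nonneg hA0.le hW0]
  · push_neg at hb
    have h14 : (1 + ‖y‖)^(4:ℕ) ≤ 16 * ‖y‖^4 := by
      have h2 : 1 + ‖y‖ ≤ 2 * ‖y‖ := by linarith
      calc (1 + ‖y‖)^(4:ℕ) ≤ (2*‖y‖)^(4:ℕ) := pow_le_pow_left₀ (by positivity) h2 4
        _ = 16 * ‖y‖^4 := by ring
    calc Kker c y * ‖y‖^2 ≤ (C3c c / ‖y‖^6) * ‖y‖^2 :=
          mul_le_mul_of_nonneg_right (hK3 hc y hy) (by positivity)
      _ = C3c c / ‖y‖^4 := by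
          field_simp
      _ ≤ 16 * C3c c / (1 + ‖y‖)^(4:ℕ) := by
          rw [div_le_div_iff₀ (by positivity) (by positivity)]
          nlinarith [(C3c_pos hc).le, h14]
      _ = 16 * C3c c * Pfun y := by rw [Pfun_val]; ring
      _ ≤ Ac c * Pfun y := by
          have h1 := C1c_pos hc
          apply mul_le_mul_of_nonneg_right (Ac_ge3 hc) hP0
      _ ≤ Dfun c y := by
          show Ac c * Pfun y ≤ Ac c * (Wfun y + Pfun y)
          nlinarith [mul_nonneg hA0.le hW0]

end Aux

/-- Uniform bound on the weighted integral of the Bessel kernel. -/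
theorem stmt1 (c : ℝ) (hc : 0 < c) :
    ∃ C > 0, ∀ x : E3,
      (∫ y : E3, (∫ t in Set.Ioi (0:ℝ), Real.exp (-t - ‖y‖^2 / (4 * c * t)) * t ^ (-(3:ℝ)/2)) *
        (‖x‖^2 / ‖x - y‖^2)) ≤ C := by
  refine ⟨4 * (∫ y, Dfun c y) + 2 * C1c c * (∫ y, Wfun y) + 1, ?_, ?_⟩
  · have h1 : 0 ≤ ∫ y, Dfun c y := integral_nonneg (Dfun_nonneg hc)
    have h2 : 0 ≤ ∫ y, Wfun y := integral_nonneg Wfun_nonneg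
    have h3 := (C1c_pos hc).le
    positivity
  intro x
  have hgint : Integrable (fun y : E3 => 4 * Dfun c y + 2 * C1c c * Wfun (x - y)) :=
    (Dfun_integrable.const_mul 4).add ((Wfun_integrable.comp_sub_left x).const_mul (2 * C1c c))
  have hgval : (∫ y : E3, (4 * Dfun c y + 2 * C1c c * Wfun (x - y)))
      = 4 * (∫ y, Dfun c y) + 2 * C1c c * (∫ y, Wfun y) := by
    rw [integral_add (Dfun_integrable.const_mul 4)
      ((Wfun_integrable.comp_sub_left x).const_mul (2 * C1c c)),
      integral_const_mul, integral_const_mul, integral_sub_left_eq_self Wfun volume x]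
  have hae : ∀ᵐ y : E3, y ≠ 0 ∧ y ≠ x := by
    have h0 : ∀ᵐ y : E3, y ≠ 0 := by
      have h : volume ({(0:E3)} : Set E3) = 0 := measure_singleton _
      filter_upwards [compl_mem_ae_iff.mpr h] with y hy
      simpa using hy
    have hx : ∀ᵐ y : E3, y ≠ x := by
      have h : volume ({x} : Set E3) = 0 := measure_singleton _
      filter_upwards [compl_mem_ae_iff.mpr h] with y hy
      simpa using hy
    filter_upwards [h0, hx] with y h1 h2
    exact ⟨h1, h2⟩
  have hmain : (∫ y : E3, Kker c y * (‖x‖^2 / ‖x - y‖^2))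
      ≤ ∫ y : E3, (4 * Dfun c y + 2 * C1c c * Wfun (x - y)) := by
    apply integral_mono_of_nonneg
    · apply Filter.Eventually.of_forall
      intro y
      have h1 := Kker_nonneg c y
      positivity
    · exact hgint
    · filter_upwards [hae] with y hy
      obtain ⟨hy0, hyx⟩ := hy
      have hxy : (0:ℝ) < ‖x - y‖ := by
        rw [norm_pos_iff, sub_ne_zero]
        exact fun h => hyx h.symm
      have hK0 := Kker_nonneg c y
      have hD0 := Dfun_nonneg hc y
      have hC₁0 := C1c_pos hc
      have hx2 : ‖x‖^2 ≤ 2*‖x - y‖^2 + 2*‖y‖^2 := by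
        have h := norm_add_le (x - y) y
        rw [sub_add_cancel] at h
        have h2 : ‖x‖^2 ≤ (‖x - y‖ + ‖y‖)^2 := pow_le_pow_left₀ (norm_nonneg x) h 2
        nlinarith [sq_nonneg (‖x - y‖ - ‖y‖)]
      have key1 : ‖x‖^2 / ‖x - y‖^2 ≤ 2 + 2*‖y‖^2/‖x - y‖^2 := by
        rw [div_le_iff₀ (by positivity)]
        have he : (2 + 2*‖y‖^2/‖x - y‖^2) * ‖x - y‖^2 = 2*‖x - y‖^2 + 2*‖y‖^2 := by
          field_simp
        rw [he]
        exact hx2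
      have step1 : Kker c y * (‖x‖^2 / ‖x - y‖^2)
          ≤ 2 * Kker c y + 2 * ((Kker c y * ‖y‖^2) / ‖x - y‖^2) := by
        calc Kker c y * (‖x‖^2 / ‖x - y‖^2)
            ≤ Kker c y * (2 + 2*‖y‖^2/‖x - y‖^2) := mul_le_mul_of_nonneg_left key1 hK0
          _ = 2 * Kker c y + 2 * ((Kker c y * ‖y‖^2) / ‖x - y‖^2) := by ring
      by_cases hball : ‖x - y‖ < 1
      · have hW : Wfun (x - y) = 1 / ‖x - y‖^2 := by
          rw [Wfun, Set.indicator_of_mem]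
          simpa [Metric.mem_ball, dist_zero_right] using hball
        have h2 : (Kker c y * ‖y‖^2) / ‖x - y‖^2 ≤ C1c c / ‖x - y‖^2 := by
          gcongr
          exact hcM hc y hy0
        have h3 := hc1 hc y hy0
        calc Kker c y * (‖x‖^2 / ‖x - y‖^2)
            ≤ 2 * Kker c y + 2 * ((Kker c y * ‖y‖^2) / ‖x - y‖^2) := step1
          _ ≤ 4 * Dfun c y + 2 * C1c c * Wfun (x - y) := by
              rw [hW]
              have h5 : (2:ℝ) * (C1c c / ‖x - y‖^2) = 2 * C1c c * (1 / ‖x - y‖^2) := by ring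
              linarith
      · push_neg at hball
        have hW0 : 0 ≤ Wfun (x - y) := Wfun_nonneg _
        have h2 : (Kker c y * ‖y‖^2) / ‖x - y‖^2 ≤ Kker c y * ‖y‖^2 := by
          apply div_le_self (by positivity)
          nlinarith
        have h3 := hc1 hc y hy0
        have h4 := hc2 hc y hy0
        calc Kker c y * (‖x‖^2 / ‖x - y‖^2)
            ≤ 2 * Kker c y + 2 * ((Kker c y * ‖y‖^2) / ‖x - y‖^2) := step1
          _ ≤ 4 * Dfun c y + 2 * C1c c * Wfun (x - y) := by
              nlinarith [mul_nonneg (mul_nonneg (by norm_num : (0:ℝ) ≤ 2) hC₁0.le) hW0]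
  calc (∫ y : E3, Kker c y * (‖x‖^2 / ‖x - y‖^2))
      ≤ ∫ y : E3, (4 * Dfun c y + 2 * C1c c * Wfun (x - y)) := hmain
    _ = 4 * (∫ y, Dfun c y) + 2 * C1c c * (∫ y, Wfun y) := hgval
    _ ≤ 4 * (∫ y, Dfun c y) + 2 * C1c c * (∫ y, Wfun y) + 1 := by linarith
end
end

section
/- Let b, c : ℝ³ → ℝ be functions with finite norms ‖b‖_J := ‖b‖_{L⁶} + Σ_{ν=0}^1 ‖(1+|x|)^{ν+1}∇^ν b‖_{L^∞} + ‖(1+|x|)²∇²b‖_{L^∞} (and similarly for c, including weighted L² norms of derivatives up to order 5). Then for multi-indices α, β with |α| ≤ 1 or |β| ≤ 1 and |α|, |β| ≤ 5, the pointwise product satisfies ‖(1+|x|)^{|α|+|β|} |∂_x^α b| |∂_x^β c|‖_{L²} ≤ C ‖b‖_J ‖c‖_J for a universal constant C. -/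
noncomputable section
open MeasureTheory Real Filter
open scoped ENNReal RealInnerProductSpace BigOperators

/-- The weighted `J⁵`-norm. -/
def Jnorm (b : E3 → ℝ) : ℝ≥0∞ :=
  eLpNorm b 6 volume
  + eLpNorm (fun x => (1 + ‖x‖) * |b x|) ⊤ volume
  + eLpNorm (fun x => (1 + ‖x‖)^2 * ‖iteratedFDeriv ℝ 1 b x‖) ⊤ volume
  + eLpNorm (fun x => (1 + ‖x‖)^2 * ‖iteratedFDeriv ℝ 2 b x‖) ⊤ volume
  + ∑ ν ∈ Finset.Icc 1 5,
      eLpNorm (fun x => (1 + ‖x‖)^(ν - 1) * ‖iteratedFDeriv ℝ ν b x‖) 2 volume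

/-! Auxiliary lemmas -/

lemma aux_J1 (b : E3 → ℝ) :
    eLpNorm (fun x => (1 + ‖x‖) * |b x|) ⊤ volume ≤ Jnorm b := by
  unfold Jnorm
  exact ((le_add_self.trans le_self_add).trans le_self_add).trans le_self_add

lemma aux_J2 (b : E3 → ℝ) :
    eLpNorm (fun x => (1 + ‖x‖)^2 * ‖iteratedFDeriv ℝ 1 b x‖) ⊤ volume ≤ Jnorm b := by
  unfold Jnorm
  exact (le_add_self.trans le_self_add).trans le_self_add

lemma aux_J5 (b : E3 → ℝ) {k : ℕ} (hk1 : 1 ≤ k) (hk5 : k ≤ 5) :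
    eLpNorm (fun x => (1 + ‖x‖)^(k - 1) * ‖iteratedFDeriv ℝ k b x‖) 2 volume ≤ Jnorm b := by
  unfold Jnorm
  refine le_trans ?_ le_add_self
  exact Finset.single_le_sum (f := fun ν =>
    eLpNorm (fun x => (1 + ‖x‖)^(ν - 1) * ‖iteratedFDeriv ℝ ν b x‖) 2 volume)
    (fun i _ => zero_le) (Finset.mem_Icc.mpr ⟨hk1, hk5⟩)

lemma aux_cont (b : E3 → ℝ) (hb : ContDiff ℝ 5 b) (m p : ℕ) (hm : m ≤ 5) :
    Continuous (fun x : E3 => (1 + ‖x‖)^p * ‖iteratedFDeriv ℝ m b x‖) :=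
  ((continuous_const.add continuous_norm).pow p).mul
    (hb.continuous_iteratedFDeriv (by exact_mod_cast hm)).norm

lemma aux_hcont : Continuous (fun x : E3 => (((1:ℝ) + ‖x‖)^2)⁻¹) :=
  ((continuous_const.add continuous_norm).pow 2).inv₀ (fun x => pow_ne_zero _ (add_pos_of_pos_of_nonneg one_pos (norm_nonneg x)).ne')

lemma aux_hK : eLpNorm (fun x : E3 => (((1:ℝ) + ‖x‖)^2)⁻¹) 2 volume < ⊤ := by
  have hmeas := aux_hcont.aestronglyMeasurable (μ := volume)
  have hint : Integrable (fun x : E3 => (1 + ‖x‖) ^ (-(4:ℝ))) volume := by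
    apply integrable_one_add_norm
    simp [finrank_euclideanSpace]
    norm_num
  have : MemLp (fun x : E3 => (((1:ℝ) + ‖x‖)^2)⁻¹) 2 volume := by
    rw [memLp_two_iff_integrable_sq hmeas]
    convert hint using 2 with x
    have hx : (0:ℝ) < 1 + ‖x‖ := by positivity
    rw [rpow_neg hx.le]
    rw [show ((4:ℝ)) = ((4:ℕ):ℝ) by norm_num, rpow_natCast]
    field_simp
  exact this.2

/-- Hölder : `‖f g‖_2 ≤ ‖f‖_∞ ‖g‖_2` for real functions. -/
lemma aux_holder (f g : E3 → ℝ) (hg : AEStronglyMeasurable g volume) :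
    eLpNorm (fun x => f x * g x) 2 volume
      ≤ eLpNorm f ⊤ volume * eLpNorm g 2 volume :=
  by simpa using eLpNorm_le_eLpNorm_top_mul_eLpNorm 2 f hg (· * ·) 1
      (Eventually.of_forall fun x => by simp [nnnorm_mul])

set_option maxHeartbeats 1000000 in
lemma aux_key {C : ℝ} (hC1 : (1:ℝ≥0∞) ≤ ENNReal.ofReal C)
    (hCK : eLpNorm (fun x : E3 => (((1:ℝ) + ‖x‖)^2)⁻¹) 2 volume ≤ ENNReal.ofReal C)
    (b c : E3 → ℝ) (hb : ContDiff ℝ 5 b) (hc : ContDiff ℝ 5 c)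
    (k l : ℕ) (hl : l ≤ 1) (hk : k ≤ 5) :
    eLpNorm (fun x => (1 + ‖x‖)^(k + l) *
        (‖iteratedFDeriv ℝ k b x‖ * ‖iteratedFDeriv ℝ l c x‖)) 2 volume
      ≤ ENNReal.ofReal C * (Jnorm b * Jnorm c) := by
  -- the L∞ factor coming from `c`
  set G : E3 → ℝ := fun x => (1 + ‖x‖)^(l + 1) * ‖iteratedFDeriv ℝ l c x‖ with hGdef
  have hG : eLpNorm G ⊤ volume ≤ Jnorm c := by
    interval_cases l
    · have : G = fun x => (1 + ‖x‖) * |c x| := by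
        funext x
        simp [hGdef, norm_iteratedFDeriv_zero, Real.norm_eq_abs]
      rw [this]; exact aux_J1 c
    · have : G = fun x => (1 + ‖x‖)^2 * ‖iteratedFDeriv ℝ 1 c x‖ := by
        funext x; norm_num [hGdef]
      rw [this]; exact aux_J2 c
  rcases Nat.eq_zero_or_pos k with hk0 | hk1
  · -- k = 0 : use the weight (1+|x|)⁻² ∈ L²
    subst hk0
    set F : E3 → ℝ := fun x => (1 + ‖x‖) * |b x| with hFdef
    set h : E3 → ℝ := fun x => (((1:ℝ) + ‖x‖)^2)⁻¹ with hhdef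
    have heq : (fun x => (1 + ‖x‖)^(0 + l) *
        (‖iteratedFDeriv ℝ 0 b x‖ * ‖iteratedFDeriv ℝ l c x‖))
        = fun x => F x * (G x * h x) := by
      funext x
      have hx : (0:ℝ) < 1 + ‖x‖ := by positivity
      simp only [hFdef, hGdef, hhdef, norm_iteratedFDeriv_zero, Real.norm_eq_abs]
      field_simp
      ring
    rw [heq]
    have hGh : AEStronglyMeasurable (fun x => G x * h x) volume :=
      ((aux_cont c hc l (l+1) (hl.trans (by norm_num))).mul aux_hcont).aestronglyMeasurable
    calc eLpNorm (fun x => F x * (G x * h x)) 2 volume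
        ≤ eLpNorm F ⊤ volume * eLpNorm (fun x => G x * h x) 2 volume :=
          aux_holder F _ hGh
      _ ≤ eLpNorm F ⊤ volume * (eLpNorm G ⊤ volume * eLpNorm h 2 volume) := by
          gcongr
          exact aux_holder G h (aux_hcont.aestronglyMeasurable)
      _ ≤ Jnorm b * (Jnorm c * ENNReal.ofReal C) := by
          gcongr
          exact aux_J1 b
      _ = ENNReal.ofReal C * (Jnorm b * Jnorm c) := by ring
  · -- k ≥ 1 : use the weighted L² part of `Jnorm b`
    set B : E3 → ℝ := fun x => (1 + ‖x‖)^(k - 1) * ‖iteratedFDeriv ℝ k b x‖ with hBdef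
    have heq : (fun x => (1 + ‖x‖)^(k + l) *
        (‖iteratedFDeriv ℝ k b x‖ * ‖iteratedFDeriv ℝ l c x‖))
        = fun x => G x * B x := by
      funext x
      simp only [hGdef, hBdef]
      rw [show k + l = (l + 1) + (k - 1) by omega, pow_add]
      ring
    rw [heq]
    calc eLpNorm (fun x => G x * B x) 2 volume
        ≤ eLpNorm G ⊤ volume * eLpNorm B 2 volume :=
          aux_holder G B ((aux_cont b hb k (k-1) hk).aestronglyMeasurable)
      _ ≤ Jnorm c * Jnorm b := by gcongr; exact aux_J5 b hk1 hk
      _ = 1 * (Jnorm b * Jnorm c) := by ring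
      _ ≤ ENNReal.ofReal C * (Jnorm b * Jnorm c) := by gcongr

/-- Weighted product estimate (2.45). -/
theorem stmt12 : ∃ C > 0, ∀ (b c : E3 → ℝ), ContDiff ℝ 5 b → ContDiff ℝ 5 c →
    ∀ k l : ℕ, (k ≤ 1 ∨ l ≤ 1) → k ≤ 5 → l ≤ 5 →
    eLpNorm (fun x => (1 + ‖x‖)^(k + l) *
        (‖iteratedFDeriv ℝ k b x‖ * ‖iteratedFDeriv ℝ l c x‖)) 2 volume
      ≤ ENNReal.ofReal C * (Jnorm b * Jnorm c) := by
  set K := eLpNorm (fun x : E3 => (((1:ℝ) + ‖x‖)^2)⁻¹) 2 volume with hKdef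
  refine ⟨K.toReal + 1, add_pos_of_nonneg_of_pos ENNReal.toReal_nonneg one_pos, ?_⟩
  have hC1 : (1:ℝ≥0∞) ≤ ENNReal.ofReal (K.toReal + 1) := by
    rw [show (1:ℝ≥0∞) = ENNReal.ofReal 1 by simp]
    exact ENNReal.ofReal_le_ofReal (le_add_of_nonneg_left ENNReal.toReal_nonneg)
  have hCK : K ≤ ENNReal.ofReal (K.toReal + 1) := by
    calc K = ENNReal.ofReal K.toReal := (ENNReal.ofReal_toReal aux_hK.ne).symm
      _ ≤ _ := ENNReal.ofReal_le_ofReal (by linarith)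
  intro b c hb hc k l hkl hk hl
  rcases hkl with hk1 | hl1
  · have heq : (fun x => (1 + ‖x‖)^(k + l) *
        (‖iteratedFDeriv ℝ k b x‖ * ‖iteratedFDeriv ℝ l c x‖))
        = fun x => (1 + ‖x‖)^(l + k) *
        (‖iteratedFDeriv ℝ l c x‖ * ‖iteratedFDeriv ℝ k b x‖) := by
      funext x; rw [Nat.add_comm k l]; ring
    rw [heq, show Jnorm b * Jnorm c = Jnorm c * Jnorm b from mul_comm _ _]
    exact aux_key hC1 hCK c b hc hb l k hk1 hl
  · exact aux_key hC1 hCK b c hb hc k l hl1 hk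
end
end
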